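/- Let c > 0 and π̂ ∈ (0,1). Then the free boundary problem — find f : [π̂,1] → ℝ and π* ∈ (π̂,1) with (1/2)[x(1-x)]²f''(x) = -c on (π̂,π*), f(x) = 1-x on [π*,1], f'(π̂) = 0, and f'(π*) = -1 — has a unique solution, given by f(x) = 2c(1-2x)·log(x/(1-x)) + Āx + B̄ on [π̂,π*] with Ā = -Ψ'(π̂) and B̄ chosen so that f(π*) = 1 - π*. -/

import Mathlib

/-- A solution of the free boundary problem of the paper: `f` is `C¹` on `[πh,1]`,
satisfies the ODE `(1/2)[x(1-x)]² f'' = -c` on `(πh,πs)`, equals `1-x` on `[πs,1]`,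
with `f'(πh) = 0` and `f'(πs) = -1`. -/
def IsFBSolution (c πh : ℝ) (f : ℝ → ℝ) (πs : ℝ) : Prop :=
  πs ∈ Set.Ioo πh 1 ∧
  (∀ x ∈ Set.Icc πh 1, DifferentiableAt ℝ f x) ∧
  (∀ x ∈ Set.Ioo πh πs, (1/2) * (x*(1-x))^2 * deriv (deriv f) x = -c) ∧
  (∀ x ∈ Set.Icc πs 1, f x = 1 - x) ∧
  deriv f πh = 0 ∧ deriv f πs = -1

open Set Filter Real


noncomputable def Psi (c x : ℝ) : ℝ := 2*c*(1-2*x)*Real.log (x/(1-x))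
noncomputable def Psi' (c x : ℝ) : ℝ := -4*c*Real.log (x/(1-x)) + 2*c*(1-2*x)/(x*(1-x))

lemma hasDerivAt_L {x : ℝ} (hx : x ∈ Set.Ioo (0:ℝ) 1) :
    HasDerivAt (fun y : ℝ => Real.log (y/(1-y))) (1/(x*(1-x))) x := by
  obtain ⟨h0, h1⟩ := hx
  have hx0 : x ≠ 0 := ne_of_gt h0
  have h1x : (0:ℝ) < 1 - x := by linarith
  have h1x0 : (1:ℝ) - x ≠ 0 := ne_of_gt h1x
  have hd : HasDerivAt (fun y : ℝ => y/(1-y)) ((1*(1-x) - x*(-1))/(1-x)^2) x := by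
    exact (hasDerivAt_id x).div (by simpa using (hasDerivAt_id x).const_sub 1) h1x0
  have hne : x/(1-x) ≠ 0 := div_ne_zero hx0 h1x0
  have := hd.log hne
  convert this using 1
  field_simp
  ring

lemma hasDerivAt_Psi (c : ℝ) {x : ℝ} (hx : x ∈ Set.Ioo (0:ℝ) 1) :
    HasDerivAt (fun y : ℝ => 2*c*(1-2*y)*Real.log (y/(1-y))) (Psi' c x) x := by
  obtain ⟨h0, h1⟩ := hx
  have h1x : (0:ℝ) < 1 - x := by linarith
  have hd : HasDerivAt (fun y : ℝ => 2*c*(1-2*y)) (2*c*(-2)) x := by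
    have : HasDerivAt (fun y : ℝ => 1-2*y) (-2) x := by
      simpa using ((hasDerivAt_id x).const_mul (2:ℝ)).const_sub 1
    simpa [mul_comm, mul_assoc] using this.const_mul (2*c)
  have := hd.mul (hasDerivAt_L ⟨h0, h1⟩)
  refine this.congr_deriv ?_
  unfold Psi'
  have hx0 : x ≠ 0 := ne_of_gt h0
  have h1x0 : (1:ℝ) - x ≠ 0 := ne_of_gt h1x
  field_simp
  try ring
  try tauto

lemma hasDerivAt_Psi' (c : ℝ) {x : ℝ} (hx : x ∈ Set.Ioo (0:ℝ) 1) :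
    HasDerivAt (Psi' c) (-2*c/(x*(1-x))^2) x := by
  obtain ⟨h0, h1⟩ := hx
  have h1x : (0:ℝ) < 1 - x := by linarith
  have hx0 : x ≠ 0 := ne_of_gt h0
  have h1x0 : (1:ℝ) - x ≠ 0 := ne_of_gt h1x
  have hden0 : x*(1-x) ≠ 0 := mul_ne_zero hx0 h1x0
  have h1' : HasDerivAt (fun y : ℝ => -4*c*Real.log (y/(1-y))) (-4*c*(1/(x*(1-x)))) x :=
    (hasDerivAt_L ⟨h0, h1⟩).const_mul (-4*c)
  have hn : HasDerivAt (fun y : ℝ => 2*c*(1-2*y)) (2*c*(-2)) x := by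
    have : HasDerivAt (fun y : ℝ => 1-2*y) (-2) x := by
      simpa using ((hasDerivAt_id x).const_mul (2:ℝ)).const_sub 1
    simpa [mul_comm, mul_assoc] using this.const_mul (2*c)
  have hdd : HasDerivAt (fun y : ℝ => y*(1-y)) (1*(1-x) + x*(-1)) x := by
    have h2 : HasDerivAt (fun y : ℝ => 1 - y) (-1) x := by
      simpa using (hasDerivAt_id x).const_sub 1
    exact (hasDerivAt_id x).mul h2
  have h2' := hn.div hdd hden0
  have := h1'.add h2'
  refine this.congr_deriv ?_
  field_simp
  ring

lemma psi'_anti {c : ℝ} (hc : 0 < c) : StrictAntiOn (Psi' c) (Set.Ioo 0 1) := by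
  apply strictAntiOn_of_deriv_neg (convex_Ioo 0 1)
  · intro x hx
    exact (hasDerivAt_Psi' c hx).differentiableAt.continuousAt.continuousWithinAt
  · intro x hx
    rw [interior_Ioo] at hx
    rw [(hasDerivAt_Psi' c hx).deriv]
    have h0 := hx.1
    have h1x : (0:ℝ) < 1 - x := by linarith [hx.2]
    have : (0:ℝ) < (x*(1-x))^2 := by positivity
    have : (0:ℝ) < 2*c := by linarith
    apply div_neg_of_neg_of_pos <;> [linarith; positivity]

lemma psi'_tendsto {c : ℝ} (hc : 0 < c) :
    Tendsto (Psi' c) (nhdsWithin 1 (Set.Iio 1)) atBot := by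
  have h1 : Tendsto (fun x : ℝ => 1 - x) (nhdsWithin 1 (Set.Iio 1)) (nhdsWithin 0 (Set.Ioi 0)) := by
    apply tendsto_nhdsWithin_of_tendsto_nhds_of_eventually_within
    · have h : Tendsto (fun x : ℝ => 1 - x) (nhds (1:ℝ)) (nhds ((1:ℝ) - 1)) :=
        (continuous_const.sub continuous_id).tendsto (1:ℝ)
      simpa using h.mono_left nhdsWithin_le_nhds
    · filter_upwards [self_mem_nhdsWithin] with x hx
      simp only [Set.mem_Iio] at hx
      simp [Set.mem_Ioi]; linarith
  have hinv : Tendsto (fun x : ℝ => (1 - x)⁻¹) (nhdsWithin 1 (Set.Iio 1)) atTop :=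
    tendsto_inv_nhdsGT_zero.comp h1
  have hdiv : Tendsto (fun x : ℝ => x / (1 - x)) (nhdsWithin 1 (Set.Iio 1)) atTop := by
    have hx1 : Tendsto (fun x : ℝ => x) (nhdsWithin 1 (Set.Iio 1)) (nhds 1) :=
      tendsto_id.mono_left nhdsWithin_le_nhds
    have := Tendsto.pos_mul_atTop one_pos hx1 hinv
    simpa [div_eq_mul_inv] using this
  have hlog : Tendsto (fun x : ℝ => Real.log (x/(1-x))) (nhdsWithin 1 (Set.Iio 1)) atTop :=
    Real.tendsto_log_atTop.comp hdiv
  have hmul : Tendsto (fun x : ℝ => 4*c*Real.log (x/(1-x))) (nhdsWithin 1 (Set.Iio 1)) atTop :=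
    Tendsto.const_mul_atTop (by linarith) hlog
  have hneg : Tendsto (fun x : ℝ => -(4*c*Real.log (x/(1-x)))) (nhdsWithin 1 (Set.Iio 1)) atBot :=
    tendsto_neg_atTop_atBot.comp hmul
  apply tendsto_atBot_mono' _ _ hneg
  filter_upwards [Ioo_mem_nhdsLT_of_mem (show (1:ℝ) ∈ Set.Ioc (1/2 : ℝ) 1 by norm_num)] with x hx
  obtain ⟨hl, hr⟩ := hx
  have h0 : (0:ℝ) < x := by linarith
  have h1x : (0:ℝ) < 1 - x := by linarith
  have h2 : 2*c*(1-2*x)/(x*(1-x)) ≤ 0 := by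
    apply div_nonpos_of_nonpos_of_nonneg
    · nlinarith
    · positivity
  unfold Psi'
  nlinarith [h2]

lemma exists_pis {c πh : ℝ} (hc : 0 < c) (hπ : πh ∈ Set.Ioo (0:ℝ) 1) :
    ∃ πs ∈ Set.Ioo πh 1, Psi' c πs = Psi' c πh - 1 := by
  obtain ⟨h0, h1⟩ := hπ
  have hev : ∀ᶠ x in nhdsWithin 1 (Set.Iio 1), Psi' c x < Psi' c πh - 1 :=
    (psi'_tendsto hc).eventually_lt_atBot _
  have hev2 : ∀ᶠ x in nhdsWithin 1 (Set.Iio 1), x ∈ Set.Ioo πh 1 :=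
    Ioo_mem_nhdsLT_of_mem (show (1:ℝ) ∈ Set.Ioc πh 1 from ⟨h1, le_refl 1⟩)
  obtain ⟨b, hb1, hb2⟩ := (hev.and hev2).exists
  have hbI : b ∈ Set.Ioo πh 1 := hb2
  have hcont : ContinuousOn (Psi' c) (Set.Icc πh b) := by
    intro x hx
    have hx01 : x ∈ Set.Ioo (0:ℝ) 1 := ⟨lt_of_lt_of_le h0 hx.1, lt_of_le_of_lt hx.2 hbI.2⟩
    exact (hasDerivAt_Psi' c hx01).differentiableAt.continuousAt.continuousWithinAt
  have hsub := intermediate_value_Icc' (le_of_lt hbI.1) hcont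
  have hmem : Psi' c πh - 1 ∈ Set.Icc (Psi' c b) (Psi' c πh) := ⟨le_of_lt hb1, by linarith⟩
  obtain ⟨πs, hπs, hval⟩ := hsub hmem
  refine ⟨πs, ⟨?_, lt_of_le_of_lt hπs.2 hbI.2⟩, hval⟩
  rcases lt_or_eq_of_le hπs.1 with h | h
  · exact h
  · exfalso; rw [← h] at hval; linarith

lemma sol_form {c πh : ℝ} (hc : 0 < c) (hπ : πh ∈ Set.Ioo (0:ℝ) 1) {f : ℝ → ℝ} {πs : ℝ}
    (hs : IsFBSolution c πh f πs) :
    Psi' c πs = Psi' c πh - 1 ∧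
    ∀ x ∈ Set.Icc πh πs,
      f x = Psi c x + (-(Psi' c πh))*x + (1 - πs - Psi c πs + Psi' c πh * πs) := by
  obtain ⟨hπs, hdiff, hode, htail, h0, h1⟩ := hs
  have hsub : Set.Icc πh πs ⊆ Set.Ioo 0 1 :=
    fun x hx => ⟨lt_of_lt_of_le hπ.1 hx.1, lt_of_le_of_lt hx.2 hπs.2⟩
  have hsub1 : Set.Icc πh πs ⊆ Set.Icc πh 1 :=
    fun x hx => ⟨hx.1, le_trans hx.2 (le_of_lt hπs.2)⟩
  have hioo : Set.Ioo πh πs ⊆ Set.Icc πh πs := Set.Ioo_subset_Icc_self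
  -- second derivative
  have hD : ∀ x ∈ Set.Ioo πh πs, HasDerivAt (deriv f) (-2*c/(x*(1-x))^2) x := by
    intro x hx
    have hx01 : x ∈ Set.Ioo (0:ℝ) 1 := hsub (hioo hx)
    have hx0 : x ≠ 0 := ne_of_gt hx01.1
    have h1x0 : (1:ℝ) - x ≠ 0 := by have := hx01.2; intro h; linarith [h]
    have hden : (x*(1-x))^2 ≠ 0 := pow_ne_zero 2 (mul_ne_zero hx0 h1x0)
    have heq := hode x hx
    have hval : deriv (deriv f) x = -2*c/(x*(1-x))^2 := by
      field_simp at heq ⊢; linarith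
    have hne : deriv (deriv f) x ≠ 0 := by
      rw [hval]
      exact div_ne_zero (by linarith) hden
    have := (differentiableAt_of_deriv_ne_zero hne).hasDerivAt
    rwa [hval] at this
  -- w := f' - Psi' has zero derivative
  set w : ℝ → ℝ := fun x => deriv f x - Psi' c x with hw_def
  have hw : ∀ x ∈ Set.Ioo πh πs, HasDerivAt w 0 x := by
    intro x hx
    have hx01 : x ∈ Set.Ioo (0:ℝ) 1 := hsub (hioo hx)
    have := (hD x hx).sub (hasDerivAt_Psi' c hx01)
    exact this.congr_deriv (sub_self _)
  set k : ℝ := w ((πh+πs)/2) with hk_def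
  have hmid : (πh+πs)/2 ∈ Set.Ioo πh πs := ⟨by linarith [hπs.1], by linarith [hπs.1]⟩
  have hwconst : ∀ a ∈ Set.Ioo πh πs, ∀ b ∈ Set.Ioo πh πs, a ≤ b → w b = w a := by
    intro a ha b hb hab
    have hIcc : Set.Icc a b ⊆ Set.Ioo πh πs :=
      fun t ht => ⟨lt_of_lt_of_le ha.1 ht.1, lt_of_le_of_lt ht.2 hb.2⟩
    have hcont : ContinuousOn w (Set.Icc a b) :=
      fun t ht => ((hw t (hIcc ht)).continuousAt).continuousWithinAt
    exact constant_of_has_deriv_right_zero hcont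
      (fun t ht => (hw t (hIcc (Set.Ico_subset_Icc_self ht))).hasDerivWithinAt) b
      (Set.right_mem_Icc.mpr hab)
  have hwk : ∀ x ∈ Set.Ioo πh πs, w x = k := by
    intro x hx
    rcases le_total x ((πh+πs)/2) with h | h
    · exact (hwconst x hx _ hmid h).symm
    · exact hwconst _ hmid x hx h
  -- V := f - Psi - k x is constant on [πh, πs]
  set V : ℝ → ℝ := fun x => f x - Psi c x - k*x with hV_def
  have hV : ∀ x ∈ Set.Ioo πh πs, HasDerivAt V 0 x := by
    intro x hx
    have hx01 : x ∈ Set.Ioo (0:ℝ) 1 := hsub (hioo hx)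
    have hfd : HasDerivAt f (deriv f x) x := (hdiff x (hsub1 (hioo hx))).hasDerivAt
    have h := (hfd.sub (hasDerivAt_Psi c hx01)).sub ((hasDerivAt_id x).const_mul k)
    have hwx := hwk x hx
    simp only [hw_def] at hwx
    have : deriv f x - Psi' c x - k * 1 = 0 := by rw [hwx]; ring
    rw [this] at h
    exact h
  have hVcont : ContinuousOn V (Set.Icc πh πs) := by
    intro t ht
    exact (((hdiff t (hsub1 ht)).continuousAt.sub
      (hasDerivAt_Psi c (hsub ht)).differentiableAt.continuousAt).sub
      (continuous_const.mul continuous_id).continuousAt).continuousWithinAt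
  have hVIoo : ∀ x ∈ Set.Ioo πh πs, V x = V πs := by
    intro x hx
    have := constant_of_has_deriv_right_zero
      (hVcont.mono (fun t ht => ⟨le_trans (le_of_lt hx.1) ht.1, ht.2⟩))
      (fun t ht => (hV t ⟨lt_of_lt_of_le hx.1 ht.1, ht.2⟩).hasDerivWithinAt)
      πs (Set.right_mem_Icc.mpr (le_of_lt hx.2))
    exact this.symm
  have hVπh : V πh = V πs := by
    have hπhIcc' : πh ∈ Set.Icc πh πs := ⟨le_refl _, le_of_lt hπs.1⟩
    have hA : Tendsto V (nhdsWithin πh (Set.Ioi πh)) (nhds (V πh)) := by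
      have : ContinuousAt V πh :=
        ((hdiff πh (hsub1 hπhIcc')).continuousAt.sub
          (hasDerivAt_Psi c (hsub hπhIcc')).differentiableAt.continuousAt).sub
          (continuous_const.mul continuous_id).continuousAt
      exact this.continuousWithinAt.tendsto
    have hB : Tendsto V (nhdsWithin πh (Set.Ioi πh)) (nhds (V πs)) := by
      apply Tendsto.congr' _ tendsto_const_nhds
      filter_upwards [Ioo_mem_nhdsGT_of_mem
        (Set.mem_Ico.mpr ⟨le_refl πh, hπs.1⟩)] with y hy
      exact (hVIoo y hy).symm
    exact tendsto_nhds_unique hA hB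
  have hVIcc : ∀ x ∈ Set.Icc πh πs, V x = V πs := by
    intro x hx
    rcases eq_or_lt_of_le hx.1 with h | h
    · rw [← h]; exact hVπh
    · rcases eq_or_lt_of_le hx.2 with h2 | h2
      · rw [h2]
      · exact hVIoo x ⟨h, h2⟩
  have hfeq : ∀ x ∈ Set.Icc πh πs, f x = Psi c x + k*x + V πs := by
    intro x hx
    have h2 : f x - Psi c x - k * x = V πs := hVIcc x hx
    linarith
  -- derivative matching at πh
  have hmemIci : Set.Icc πh πs ∈ nhdsWithin πh (Set.Ici πh) := by
    rw [← Set.Ici_inter_Iic]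
    exact inter_mem_nhdsWithin _ (Iic_mem_nhds hπs.1)
  have hmemIic : Set.Icc πh πs ∈ nhdsWithin πs (Set.Iic πs) := by
    rw [← Set.Ici_inter_Iic]
    rw [inter_comm]
    exact inter_mem_nhdsWithin _ (Ici_mem_nhds hπs.1)
  have hπhIcc : πh ∈ Set.Icc πh πs := ⟨le_refl _, le_of_lt hπs.1⟩
  have hπsIcc : πs ∈ Set.Icc πh πs := ⟨le_of_lt hπs.1, le_refl _⟩
  have hFd : ∀ y ∈ Set.Ioo (0:ℝ) 1,
      HasDerivAt (fun x => Psi c x + k*x + V πs) (Psi' c y + k) y := by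
    intro y hy
    have := ((hasDerivAt_Psi c hy).add ((hasDerivAt_id y).const_mul k)).add_const (V πs)
    exact this.congr_deriv (by ring)
  have hk0 : (0:ℝ) = Psi' c πh + k := by
    have hleft : HasDerivWithinAt f 0 (Set.Ici πh) πh := by
      have := (hdiff πh ⟨le_refl _, le_of_lt hπ.2⟩).hasDerivAt
      rw [h0] at this
      exact this.hasDerivWithinAt
    have hright : HasDerivWithinAt f (Psi' c πh + k) (Set.Ici πh) πh := by
      apply ((hFd πh hπ).hasDerivWithinAt).congr_of_eventuallyEq
      · filter_upwards [hmemIci] with y hy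
        exact hfeq y hy
      · exact hfeq πh hπhIcc
    have u := uniqueDiffOn_Ici πh πh Set.self_mem_Ici
    rw [← hleft.derivWithin u, ← hright.derivWithin u]
  have hk1 : (-1:ℝ) = Psi' c πs + k := by
    have hπs01 : πs ∈ Set.Ioo (0:ℝ) 1 := hsub hπsIcc
    have hleft : HasDerivWithinAt f (-1) (Set.Iic πs) πs := by
      have := (hdiff πs (hsub1 hπsIcc)).hasDerivAt
      rw [h1] at this
      exact this.hasDerivWithinAt
    have hright : HasDerivWithinAt f (Psi' c πs + k) (Set.Iic πs) πs := by
      apply ((hFd πs hπs01).hasDerivWithinAt).congr_of_eventuallyEq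
      · filter_upwards [hmemIic] with y hy
        exact hfeq y hy
      · exact hfeq πs hπsIcc
    have u := uniqueDiffOn_Iic πs πs Set.self_mem_Iic
    rw [← hleft.derivWithin u, ← hright.derivWithin u]
  have hkval : k = -(Psi' c πh) := by linarith
  have hfps : f πs = 1 - πs := htail πs ⟨le_refl _, le_of_lt hπs.2⟩
  have hC : V πs = 1 - πs - Psi c πs + Psi' c πh * πs := by
    have hv : V πs = f πs - Psi c πs - k * πs := rfl
    rw [hv, hfps, hkval]; ring
  constructor
  · linarith
  · intro x hx
    rw [hfeq x hx, hkval, hC]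

lemma exists_sol {c πh : ℝ} (hc : 0 < c) (hπ : πh ∈ Set.Ioo (0:ℝ) 1) :
    ∃ πs B : ℝ, IsFBSolution c πh
      (fun x => if x ≤ πs then
          2*c*(1-2*x)*Real.log (x/(1-x)) + (-(Psi' c πh)) * x + B
        else 1 - x) πs := by
  obtain ⟨πs, hπsI, hval⟩ := exists_pis hc hπ
  have hπs01 : πs ∈ Set.Ioo (0:ℝ) 1 := ⟨lt_trans hπ.1 hπsI.1, hπsI.2⟩
  refine ⟨πs, 1 - πs - Psi c πs + Psi' c πh * πs, ?_⟩
  set B : ℝ := 1 - πs - Psi c πs + Psi' c πh * πs with hB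
  set F : ℝ → ℝ := fun x => 2*c*(1-2*x)*Real.log (x/(1-x)) + (-(Psi' c πh)) * x + B
    with hF
  set g : ℝ → ℝ := fun x => if x ≤ πs then F x else 1 - x with hg
  show IsFBSolution c πh g πs
  have hFd : ∀ y ∈ Set.Ioo (0:ℝ) 1, HasDerivAt F (Psi' c y + (-(Psi' c πh))) y := by
    intro y hy
    have hlin : HasDerivAt (fun x : ℝ => (-(Psi' c πh)) * x) (-(Psi' c πh)) y := by
      simpa using (hasDerivAt_id y).const_mul (-(Psi' c πh))
    exact ((hasDerivAt_Psi c hy).add hlin).add_const B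
  have hFπs : F πs = 1 - πs := by
    have : F πs = Psi c πs + (-(Psi' c πh)) * πs + B := rfl
    rw [this, hB]; ring
  have hgF : ∀ y ∈ Set.Iic πs, g y = F y := fun y hy => if_pos hy
  have hgT : ∀ y ∈ Set.Ici πs, g y = 1 - y := by
    intro y hy
    by_cases h : y ≤ πs
    · have he : y = πs := le_antisymm h hy
      rw [he]
      have : g πs = F πs := if_pos (le_refl πs)
      rw [this, hFπs]
    · simp only [hg, if_neg h]
  have hderivπs : HasDerivAt g (-1) πs := by
    have hl : HasDerivWithinAt g (-1) (Set.Iic πs) πs := by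
      have hF' : HasDerivAt F (-1) πs := by
        have h := hFd πs hπs01
        rw [hval] at h
        have he : Psi' c πh - 1 + -Psi' c πh = -1 := by ring
        rwa [he] at h
      exact (hF'.hasDerivWithinAt).congr hgF (hgF πs (Set.mem_Iic.mpr (le_refl _)))
    have hr : HasDerivWithinAt g (-1) (Set.Ici πs) πs := by
      have hid : HasDerivAt (fun y : ℝ => 1 - y) (-1) πs := by
        simpa using (hasDerivAt_id πs).const_sub 1
      exact (hid.hasDerivWithinAt).congr hgT (hgT πs (Set.mem_Ici.mpr (le_refl _)))
    have h := hl.union hr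
    rwa [Set.Iic_union_Ici, hasDerivWithinAt_univ] at h
  have hgFev : ∀ x, x < πs → g =ᶠ[nhds x] F := by
    intro x hx
    filter_upwards [Iio_mem_nhds hx] with y hy
    exact hgF y (Set.mem_Iic.mpr (le_of_lt hy))
  have hgTev : ∀ x, πs < x → g =ᶠ[nhds x] (fun y : ℝ => 1 - y) := by
    intro x hx
    filter_upwards [Ioi_mem_nhds hx] with y hy
    exact hgT y (Set.mem_Ici.mpr (le_of_lt hy))
  refine ⟨hπsI, ?_, ?_, ?_, ?_, ?_⟩
  · intro x hx
    rcases lt_trichotomy x πs with h | h | h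
    · have hx01 : x ∈ Set.Ioo (0:ℝ) 1 := ⟨lt_of_lt_of_le hπ.1 hx.1, lt_trans h hπs01.2⟩
      exact ((hgFev x h).differentiableAt_iff).mpr (hFd x hx01).differentiableAt
    · rw [h]; exact hderivπs.differentiableAt
    · have hid : DifferentiableAt ℝ (fun y : ℝ => 1 - y) x :=
        (differentiable_const (1:ℝ)).sub differentiable_id |>.differentiableAt
      exact ((hgTev x h).differentiableAt_iff).mpr hid
  · intro x hx
    have hx01 : x ∈ Set.Ioo (0:ℝ) 1 := ⟨lt_trans hπ.1 hx.1, lt_trans hx.2 hπs01.2⟩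
    have h2 : deriv (deriv g) x = deriv (deriv F) x := ((hgFev x hx.2).deriv).deriv_eq
    have h3 : deriv F =ᶠ[nhds x] (fun y => Psi' c y + (-(Psi' c πh))) := by
      filter_upwards [isOpen_Ioo.mem_nhds hx01] with y hy
      exact (hFd y hy).deriv
    have h4 : deriv (deriv F) x = -2*c/(x*(1-x))^2 := by
      rw [h3.deriv_eq]
      exact ((hasDerivAt_Psi' c hx01).add_const (-(Psi' c πh))).deriv
    rw [h2, h4]
    have hx0 : x ≠ 0 := ne_of_gt hx01.1
    have h1x0 : (1:ℝ) - x ≠ 0 := by have := hx01.2; intro hh; linarith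
    field_simp
  · intro x hx
    exact hgT x hx.1
  · have hF0 : HasDerivAt F 0 πh := by
      have h := hFd πh hπ
      have he : Psi' c πh + -Psi' c πh = 0 := by ring
      rwa [he] at h
    exact (hF0.congr_of_eventuallyEq (hgFev πh hπsI.1)).deriv
  · exact hderivπs.deriv

theorem stmt7 (c : ℝ) (hc : 0 < c) (πh : ℝ) (hπ : πh ∈ Set.Ioo (0:ℝ) 1) :
    (∃ πs B : ℝ, IsFBSolution c πh
      (fun x => if x ≤ πs then
          2*c*(1-2*x)*Real.log (x/(1-x))
            + (-(deriv (fun y : ℝ => 2*c*(1-2*y)*Real.log (y/(1-y))) πh)) * x + B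
        else 1 - x) πs) ∧
    (∀ (f g : ℝ → ℝ) (πs σs : ℝ),
      IsFBSolution c πh f πs → IsFBSolution c πh g σs →
        πs = σs ∧ ∀ x ∈ Set.Icc πh 1, f x = g x) := by
  have hA : deriv (fun y : ℝ => 2*c*(1-2*y)*Real.log (y/(1-y))) πh = Psi' c πh :=
    (hasDerivAt_Psi c hπ).deriv
  constructor
  · rw [hA]
    exact exists_sol hc hπ
  · intro f g πs σs hf hg
    obtain ⟨hfe, hff⟩ := sol_form hc hπ hf
    obtain ⟨hge, hgf⟩ := sol_form hc hπ hg
    have hπs01 : πs ∈ Set.Ioo (0:ℝ) 1 := ⟨lt_trans hπ.1 hf.1.1, hf.1.2⟩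
    have hσs01 : σs ∈ Set.Ioo (0:ℝ) 1 := ⟨lt_trans hπ.1 hg.1.1, hg.1.2⟩
    have heq : πs = σs := (psi'_anti hc).injOn hπs01 hσs01 (hfe.trans hge.symm)
    subst heq
    refine ⟨rfl, ?_⟩
    intro x hx
    rcases le_total x πs with h | h
    · rw [hff x ⟨hx.1, h⟩, hgf x ⟨hx.1, h⟩]
    · rw [hf.2.2.2.1 x ⟨h, hx.2⟩, hg.2.2.2.1 x ⟨h, hx.2⟩]
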